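/- Let K be a commutative unital ring and let G be a functor from the category of commutative unital K-algebras to the category of groups. Let A and A' be commutative unital K-algebras, let f be a natural transformation from the functor R ↦ Hom_{K-alg}(A, R) to the underlying-set functor of G, and let f' be a natural transformation from R ↦ Hom_{K-alg}(A', R) to the underlying-set functor of G. For each K-algebra R let H(R) ≤ G(R) be the subgroup generated by the image f_R(Hom_{K-alg}(A, R)). Suppose f'_R(Hom_{K-alg}(A', R)) ⊆ H(R) for all R. Then there exists n ≥ 0 such that for all commutative unital K-algebras R, f'_R(Hom_{K-alg}(A', R)) ⊆ (f_R(Hom_{K-alg}(A, R)) ∪ {1} ∪ f_R(Hom_{K-alg}(A, R))^{-1})^n, where the right-hand side is the set of all products of n elements each of which is a value of f_R, the identity, or an inverse of a value of f_R. In particular, the width of elements of f'(X') with respect to the generating set f(X) is bounded uniformly in R. -/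

import Mathlib

open Pointwise

universe u

/-- A functor from the category of commutative unital `K`-algebras (in a fixed
universe) to the category of groups, presented explicitly. -/
structure GroupFunctor (K : Type u) [CommRing K] where
  obj : (R : Type u) → [CommRing R] → [Algebra K R] → GrpCat.{u}
  map : {R S : Type u} → [CommRing R] → [Algebra K R] → [CommRing S] → [Algebra K S] →
    (R →ₐ[K] S) → (obj R →* obj S)
  map_id : ∀ (R : Type u) [CommRing R] [Algebra K R],
    map (AlgHom.id K R) = MonoidHom.id (obj R)
  map_comp : ∀ {R S T : Type u} [CommRing R] [Algebra K R] [CommRing S] [Algebra K S]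
    [CommRing T] [Algebra K T] (φ : R →ₐ[K] S) (ψ : S →ₐ[K] T),
    map (ψ.comp φ) = (map ψ).comp (map φ)

/-- Let `G` be a group-valued functor on commutative unital `K`-algebras,
`f` a natural transformation from `R ↦ Hom_{K-alg}(A, R)` to the underlying-set
functor of `G`, and `f'` a natural transformation from `R ↦ Hom_{K-alg}(A', R)`
to the underlying-set functor of `G`.  If every value of `f'` lies in the
subgroup generated by the values of `f`, then there is a uniform bound `n` such
that every value of `f'` is a product of `n` factors each of which is a value
of `f`, the identity, or an inverse of a value of `f`. -/

private lemma list_prod_mem_pow {M : Type*} [Monoid M] (U : Set M) :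
    ∀ (l : List M), (∀ a ∈ l, a ∈ U) → l.prod ∈ U ^ l.length := by
  intro l
  induction l with
  | nil => intro _; simp [Set.mem_one]
  | cons a t ih =>
      intro h
      rw [List.prod_cons, List.length_cons, pow_succ']
      exact Set.mul_mem_mul (h a (by simp)) (ih fun b hb => h b (by simp [hb]))

theorem bounded_width_of_scheme_generated
    {K : Type u} [CommRing K] (G : GroupFunctor K)
    (A A' : Type u) [CommRing A] [Algebra K A] [CommRing A'] [Algebra K A']
    (f : (R : Type u) → [CommRing R] → [Algebra K R] → (A →ₐ[K] R) → G.obj R)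
    (hf : ∀ {R S : Type u} [CommRing R] [Algebra K R] [CommRing S] [Algebra K S]
      (φ : R →ₐ[K] S) (x : A →ₐ[K] R), G.map φ (f R x) = f S (φ.comp x))
    (f' : (R : Type u) → [CommRing R] → [Algebra K R] → (A' →ₐ[K] R) → G.obj R)
    (hf' : ∀ {R S : Type u} [CommRing R] [Algebra K R] [CommRing S] [Algebra K S]
      (φ : R →ₐ[K] S) (x : A' →ₐ[K] R), G.map φ (f' R x) = f' S (φ.comp x))
    (hsub : ∀ (R : Type u) [CommRing R] [Algebra K R] (x : A' →ₐ[K] R),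
      f' R x ∈ Subgroup.closure (Set.range (f R))) :
    ∃ n : ℕ, ∀ (R : Type u) [CommRing R] [Algebra K R] (x : A' →ₐ[K] R),
      f' R x ∈ (Set.range (f R) ∪ {1} ∪ (Set.range (f R))⁻¹) ^ n := by
  have hmem : f' A' (AlgHom.id K A') ∈
      Submonoid.closure (Set.range (f A') ∪ (Set.range (f A'))⁻¹) := by
    rw [← Subgroup.closure_toSubmonoid]
    exact hsub A' (AlgHom.id K A')
  obtain ⟨l, hl, hprod⟩ := Submonoid.exists_list_of_mem_closure hmem
  refine ⟨l.length, fun R _ _ x => ?_⟩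
  have hx : f' R x = G.map x (f' A' (AlgHom.id K A')) := by
    rw [hf' x (AlgHom.id K A'), AlgHom.comp_id]
  rw [hx, ← hprod, map_list_prod]
  have := list_prod_mem_pow (Set.range (f R) ∪ {1} ∪ (Set.range (f R))⁻¹)
    (l.map (G.map x)) ?_
  · simpa using this
  · intro b hb
    obtain ⟨a, ha, rfl⟩ := List.mem_map.mp hb
    rcases hl a ha with h | h
    · obtain ⟨y, rfl⟩ := h
      exact Or.inl (Or.inl ⟨x.comp y, (hf x y).symm⟩)
    · obtain ⟨y, hy⟩ := Set.mem_inv.mp h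
      refine Or.inr (Set.mem_inv.mpr ⟨x.comp y, ?_⟩)
      rw [← hf x y, hy, map_inv]
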